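/- Derivative of the constraint-manifold parametrization (chain-rule identity of Theorem 1's proof). Let f : E → ℝ and h : E → F₁ be continuously differentiable, let Φ : E → F₁ × F₂, Φ(x) = (h(x), q(x)), be a global C¹ diffeomorphism satisfying the orthonormality conditions, and suppose Dh(x)∘Dh(x)† is invertible for every x ∈ E. Define p(η) = Φ⁻¹(0, η). Then p is differentiable with Fréchet derivative Dp(η) = Dq(p(η))† for every η ∈ F₂, and consequently the gradient of f̃ = f ∘ p satisfies ∇f̃(η) = Dq(p(η))(∇f(p(η))). -/

import Mathlib

open scoped RealInnerProductSpace

/-- Derivative of the constraint-manifold parametrization.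
With `Φ = (h, q)` a global C¹ diffeomorphism (inverse `Ψ`) satisfying the orthonormality
conditions and `Dh ∘ Dh†` invertible, the map `p η = Ψ (0, η)` is differentiable with
`Dp(η) = Dq(p η)†`, and the gradient of `f̃ = f ∘ p` is
`∇f̃(η) = Dq(p η) (∇f (p η))`. -/
theorem constraint_parametrization_derivative
    (n m : ℕ) (hm : 1 ≤ m) (hmn : m < n)
    (f : EuclideanSpace ℝ (Fin n) → ℝ)
    (h : EuclideanSpace ℝ (Fin n) → EuclideanSpace ℝ (Fin m))
    (q : EuclideanSpace ℝ (Fin n) → EuclideanSpace ℝ (Fin (n - m)))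
    (Ψ : EuclideanSpace ℝ (Fin m) × EuclideanSpace ℝ (Fin (n - m)) → EuclideanSpace ℝ (Fin n))
    (hf : ContDiff ℝ 1 f) (hh : ContDiff ℝ 1 h) (hq : ContDiff ℝ 1 q)
    (hΨ : ContDiff ℝ 1 Ψ)
    (hleft : ∀ x, Ψ (h x, q x) = x)
    (hright : ∀ p, (h (Ψ p), q (Ψ p)) = p)
    (horth₁ : ∀ x, (fderiv ℝ q x) ∘L (ContinuousLinearMap.adjoint (fderiv ℝ q x))
      = ContinuousLinearMap.id ℝ (EuclideanSpace ℝ (Fin (n - m))))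
    (horth₂ : ∀ x, (fderiv ℝ q x) ∘L (ContinuousLinearMap.adjoint (fderiv ℝ h x)) = 0)
    (hinv : ∀ x, IsUnit ((fderiv ℝ h x) ∘L (ContinuousLinearMap.adjoint (fderiv ℝ h x)))) :
    ∀ η : EuclideanSpace ℝ (Fin (n - m)),
      HasFDerivAt (fun η' => Ψ (0, η'))
        (ContinuousLinearMap.adjoint (fderiv ℝ q (Ψ (0, η)))) η ∧
      gradient (fun η' => f (Ψ (0, η'))) η
        = (fderiv ℝ q (Ψ (0, η))) (gradient f (Ψ (0, η))) := by
  intro η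
  set x := Ψ (0, η) with hx
  have hΦx : (h x, q x) = (0, η) := hright (0, η)
  have hhd : HasFDerivAt h (fderiv ℝ h x) x :=
    (hh.differentiable one_ne_zero x).hasFDerivAt
  have hqd : HasFDerivAt q (fderiv ℝ q x) x :=
    (hq.differentiable one_ne_zero x).hasFDerivAt
  set B := fderiv ℝ Ψ (0, η) with hB
  have hΨd : HasFDerivAt Ψ B (0, η) := (hΨ.differentiable one_ne_zero _).hasFDerivAt
  set A := (fderiv ℝ h x).prod (fderiv ℝ q x) with hA
  have hAd : HasFDerivAt (fun x' => (h x', q x')) A x := HasFDerivAt.prodMk hhd hqd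
  have hBA : B ∘L A = ContinuousLinearMap.id ℝ (EuclideanSpace ℝ (Fin n)) := by
    have hcomp : HasFDerivAt (fun x' => Ψ (h x', q x')) (B ∘L A) x := by
      have h1 : HasFDerivAt Ψ B (h x, q x) := hΦx ▸ hΨd
      exact HasFDerivAt.comp x h1 hAd
    have hid : HasFDerivAt (fun x' : EuclideanSpace ℝ (Fin n) => Ψ (h x', q x'))
        (ContinuousLinearMap.id ℝ (EuclideanSpace ℝ (Fin n))) x :=
      HasFDerivAt.congr_of_eventuallyEq (hasFDerivAt_id x)
        (Filter.Eventually.of_forall fun y => (hleft y))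
    exact HasFDerivAt.unique hcomp hid
  set Q := ContinuousLinearMap.adjoint (fderiv ℝ q x) with hQ
  have hAQ : A ∘L Q = ContinuousLinearMap.inr ℝ _ _ := by
    have h20 : (fderiv ℝ h x) ∘L Q = 0 := by
      have h0 := congrArg ContinuousLinearMap.adjoint (horth₂ x)
      rwa [ContinuousLinearMap.adjoint_comp, ContinuousLinearMap.adjoint_adjoint,
        map_zero] at h0
    refine ContinuousLinearMap.ext fun v => Prod.ext ?_ ?_
    · exact congrFun (congrArg DFunLike.coe h20) v
    · exact congrFun (congrArg DFunLike.coe (horth₁ x)) v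
  have hBQ : B ∘L ContinuousLinearMap.inr ℝ _ _ = Q := by
    calc B ∘L ContinuousLinearMap.inr ℝ _ _ = B ∘L (A ∘L Q) := by rw [hAQ]
    _ = (B ∘L A) ∘L Q := by rw [ContinuousLinearMap.comp_assoc]
    _ = Q := by rw [hBA]; ext v; simp
  have hpd : HasFDerivAt (fun η' => Ψ (0, η')) Q η := by
    have hinr : HasFDerivAt
        (fun η' : EuclideanSpace ℝ (Fin (n - m)) =>
          ((0 : EuclideanSpace ℝ (Fin m)), η'))
        (ContinuousLinearMap.inr ℝ (EuclideanSpace ℝ (Fin m))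
          (EuclideanSpace ℝ (Fin (n - m)))) η :=
      (ContinuousLinearMap.inr ℝ (EuclideanSpace ℝ (Fin m))
        (EuclideanSpace ℝ (Fin (n - m)))).hasFDerivAt
    have := HasFDerivAt.comp η hΨd hinr
    rwa [hBQ] at this
  refine ⟨hpd, ?_⟩
  have hfd : HasFDerivAt f (fderiv ℝ f x) x := (hf.differentiable one_ne_zero x).hasFDerivAt
  have hgd : HasFDerivAt (fun η' => f (Ψ (0, η'))) (fderiv ℝ f x ∘L Q) η :=
    HasFDerivAt.comp η hfd hpd
  have hdual : fderiv ℝ f x =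
      InnerProductSpace.toDual ℝ (EuclideanSpace ℝ (Fin n)) (gradient f x) := by
    rw [gradient, LinearIsometryEquiv.apply_symm_apply]
  have hkey : (fderiv ℝ f x ∘L Q : EuclideanSpace ℝ (Fin (n - m)) →L[ℝ] ℝ)
      = InnerProductSpace.toDual ℝ _ ((fderiv ℝ q x) (gradient f x)) := by
    ext v
    rw [hdual]
    simp only [ContinuousLinearMap.coe_comp', Function.comp_apply,
      InnerProductSpace.toDual_apply_apply, hQ]
    exact ContinuousLinearMap.adjoint_inner_right (fderiv ℝ q x)
      (gradient f x) v
  have hgrad : HasGradientAt (fun η' => f (Ψ (0, η')))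
      ((fderiv ℝ q x) (gradient f x)) η := by
    rw [hasGradientAt_iff_hasFDerivAt]
    rwa [hkey] at hgd
  exact hgrad.gradient
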